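/- Let r < ℓ be positive integers and let H' be an r×ℓ matrix over GF(3) whose columns are h'_1,…,h'_ℓ. For a ∈ GF(3)^r, define f(a) as the number of x ∈ GF(2)^{2ℓ} with H·x = a over GF(3), where H has columns (2h'_1, h'_1, …, 2h'_ℓ, h'_ℓ). Then f(0) ≥ 4^ℓ/3^r + 2·(4/3)^r − 8/3. -/

import Mathlib

open Finset

/-- The map Γ : GF(2)² → GF(3): (0,0)↦0, (0,1)↦1, (1,0)↦2, (1,1)↦0. -/
def gammaMap (a b : ZMod 2) : ZMod 3 :=
  if a = 0 then (if b = 0 then 0 else 1) else (if b = 0 then 2 else 0)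

/-- Embedding of binary entries 0,1 into GF(3). -/
def emb (a : ZMod 2) : ZMod 3 := if a = 0 then 0 else 1

/-- The matrix `H` whose columns are `(2h'_1, h'_1, 2h'_2, h'_2, …)`. -/
def doubledMatrix {r ℓ : ℕ} (H' : Matrix (Fin r) (Fin ℓ) (ZMod 3)) :
    Matrix (Fin r) (Fin (2 * ℓ)) (ZMod 3) :=
  Matrix.of fun i (j : Fin (2 * ℓ)) =>
    (if (j : ℕ) % 2 = 0 then 2 else 1) *
      H' i ⟨(j : ℕ) / 2, by have := j.isLt; omega⟩

def pairVal (c : ZMod 3) (s : Bool) : ZMod 2 × ZMod 2 :=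
  if c = 1 then (0,1) else if c = 2 then (1,0) else if s then (1,1) else (0,0)

lemma gamma_eq (a b : ZMod 2) : gammaMap a b = 2 * emb a + emb b := by revert a b; decide

lemma gamma_pairVal (c : ZMod 3) (s : Bool) :
    gammaMap (pairVal c s).1 (pairVal c s).2 = c := by revert c s; decide

lemma pairVal_gamma (a b : ZMod 2) :
    pairVal (gammaMap a b) (decide (a = 1 ∧ b = 1)) = (a, b) := by revert a b; decide

lemma pairVal_ones (c : ZMod 3) (s : Bool) :
    ((pairVal c s).1 = 1 ∧ (pairVal c s).2 = 1) ↔ (s = true ∧ c = 0) := by revert c s; decide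

lemma gamma_ones : gammaMap 1 1 = 0 := by decide

def pairIdx {ℓ : ℕ} (p : Fin ℓ × Bool) : Fin (2 * ℓ) :=
  ⟨2 * p.1 + (if p.2 then 1 else 0), by
    rcases p with ⟨k, b⟩; have := k.isLt; cases b <;> simp <;> omega⟩

lemma pairIdx_bij {ℓ : ℕ} : Function.Bijective (pairIdx (ℓ := ℓ)) := by
  rw [Fintype.bijective_iff_surjective_and_card]
  refine ⟨?_, by simp [mul_comm]⟩
  intro j
  refine ⟨⟨⟨(j : ℕ) / 2, by have := j.isLt; omega⟩, decide ((j : ℕ) % 2 = 1)⟩, ?_⟩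
  apply Fin.ext
  simp only [pairIdx]
  by_cases h : (j : ℕ) % 2 = 1 <;> simp [h] <;> omega

lemma sumPairSplit {M : Type*} [AddCommMonoid M] {ℓ : ℕ} (f : Fin (2 * ℓ) → M) :
    ∑ j, f j = ∑ k : Fin ℓ, (f (pairIdx (k, false)) + f (pairIdx (k, true))) := by
  rw [← Fintype.sum_bijective pairIdx pairIdx_bij (fun p => f (pairIdx p)) f (fun _ => rfl)]
  rw [Fintype.sum_prod_type]
  refine Finset.sum_congr rfl fun k _ => ?_
  simp [add_comm]

def Phi {ℓ : ℕ} (x : Fin (2 * ℓ) → ZMod 2) : Fin ℓ → ZMod 3 :=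
  fun k => gammaMap (x (pairIdx (k, false))) (x (pairIdx (k, true)))

lemma pairIdx_false_val {ℓ : ℕ} (k : Fin ℓ) : (pairIdx (k, false) : ℕ) = 2 * k := rfl
lemma pairIdx_true_val {ℓ : ℕ} (k : Fin ℓ) : (pairIdx (k, true) : ℕ) = 2 * k + 1 := rfl

lemma doubled_apply_false {r ℓ : ℕ} (H' : Matrix (Fin r) (Fin ℓ) (ZMod 3)) (i : Fin r) (k : Fin ℓ) :
    doubledMatrix H' i (pairIdx (k, false)) = 2 * H' i k := by
  simp only [doubledMatrix, Matrix.of_apply, pairIdx_false_val]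
  simp only [show 2 * (k:ℕ) % 2 = 0 by omega, ↓reduceIte]
  congr 1
  exact Fin.ext (by simp)

lemma doubled_apply_true {r ℓ : ℕ} (H' : Matrix (Fin r) (Fin ℓ) (ZMod 3)) (i : Fin r) (k : Fin ℓ) :
    doubledMatrix H' i (pairIdx (k, true)) = H' i k := by
  simp only [doubledMatrix, Matrix.of_apply, pairIdx_true_val]
  simp only [show (2 * (k:ℕ) + 1) % 2 ≠ 0 by omega, ↓reduceIte, one_mul]
  congr 1
  exact Fin.ext (by simp; omega)

lemma mulVec_pair {r ℓ : ℕ} (H' : Matrix (Fin r) (Fin ℓ) (ZMod 3)) (x : Fin (2 * ℓ) → ZMod 2) :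
    (doubledMatrix H').mulVec (fun j => emb (x j)) = H'.mulVec (Phi x) := by
  funext i
  show ∑ j, doubledMatrix H' i j * emb (x j) = ∑ k, H' i k * Phi x k
  rw [sumPairSplit]
  refine Finset.sum_congr rfl fun k _ => ?_
  rw [doubled_apply_false, doubled_apply_true, Phi, gamma_eq]
  ring

def Psi {ℓ : ℕ} (x : Fin (2 * ℓ) → ZMod 2) : Finset (Fin ℓ) :=
  univ.filter (fun k => x (pairIdx (k, false)) = 1 ∧ x (pairIdx (k, true)) = 1)

def Lam {ℓ : ℕ} (y : Fin ℓ → ZMod 3) (S : Finset (Fin ℓ)) : Fin (2 * ℓ) → ZMod 2 :=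
  fun j =>
    let k : Fin ℓ := ⟨(j : ℕ) / 2, by have := j.isLt; omega⟩
    if (j : ℕ) % 2 = 0 then (pairVal (y k) (decide (k ∈ S))).1
    else (pairVal (y k) (decide (k ∈ S))).2

lemma Lam_false {ℓ : ℕ} (y : Fin ℓ → ZMod 3) (S : Finset (Fin ℓ)) (k : Fin ℓ) :
    Lam y S (pairIdx (k, false)) = (pairVal (y k) (decide (k ∈ S))).1 := by
  have h1 : ((pairIdx (k, false) : Fin (2*ℓ)) : ℕ) = 2 * k := rfl
  simp only [Lam, h1]
  rw [if_pos (by omega)]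
  have : (⟨(2 * (k:ℕ)) / 2, by have := k.isLt; omega⟩ : Fin ℓ) = k := Fin.ext (by simp)
  rw [this]

lemma Lam_true {ℓ : ℕ} (y : Fin ℓ → ZMod 3) (S : Finset (Fin ℓ)) (k : Fin ℓ) :
    Lam y S (pairIdx (k, true)) = (pairVal (y k) (decide (k ∈ S))).2 := by
  have h1 : ((pairIdx (k, true) : Fin (2*ℓ)) : ℕ) = 2 * k + 1 := rfl
  simp only [Lam, h1]
  rw [if_neg (by omega)]
  have : (⟨(2 * (k:ℕ) + 1) / 2, by have := k.isLt; omega⟩ : Fin ℓ) = k := Fin.ext (by simp; omega)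
  rw [this]

lemma Phi_Lam {ℓ : ℕ} (y : Fin ℓ → ZMod 3) (S : Finset (Fin ℓ)) : Phi (Lam y S) = y := by
  funext k
  rw [Phi, Lam_false, Lam_true, gamma_pairVal]

lemma Psi_Lam {ℓ : ℕ} (y : Fin ℓ → ZMod 3) (S : Finset (Fin ℓ)) (hy : ∀ k ∈ S, y k = 0) :
    Psi (Lam y S) = S := by
  ext k
  simp only [Psi, mem_filter, mem_univ, true_and, Lam_false, Lam_true, pairVal_ones]
  constructor
  · rintro ⟨hd, -⟩; exact of_decide_eq_true hd
  · intro hk; exact ⟨decide_eq_true hk, hy k hk⟩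

lemma Lam_Phi {ℓ : ℕ} (x : Fin (2 * ℓ) → ZMod 2) : Lam (Phi x) (Psi x) = x := by
  funext j
  have hk : (j : ℕ) / 2 < ℓ := by have := j.isLt; omega
  set k : Fin ℓ := ⟨(j : ℕ) / 2, hk⟩ with hkdef
  have hmem : decide (k ∈ Psi x) = decide (x (pairIdx (k, false)) = 1 ∧ x (pairIdx (k, true)) = 1) := by
    apply decide_eq_decide.mpr
    simp [Psi]
  have hpv : pairVal (Phi x k) (decide (k ∈ Psi x))
      = (x (pairIdx (k, false)), x (pairIdx (k, true))) := by
    rw [hmem, Phi, pairVal_gamma]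
  rcases Nat.even_or_odd (j : ℕ) with he | ho
  · have he' : (j : ℕ) % 2 = 0 := Nat.even_iff.mp he
    have hj : j = pairIdx (k, false) := Fin.ext (by
      show (j : ℕ) = 2 * ((j : ℕ) / 2) + (if false then 1 else 0)
      simp only [if_neg Bool.false_ne_true, Bool.false_eq_true, if_false]
      omega)
    rw [hj, Lam_false, hpv]
  · have ho' : (j : ℕ) % 2 = 1 := Nat.odd_iff.mp ho
    have hj : j = pairIdx (k, true) := Fin.ext (by
      show (j : ℕ) = 2 * ((j : ℕ) / 2) + (if true then 1 else 0)
      simp only [if_true]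
      omega)
    rw [hj, Lam_true, hpv]

lemma count_eq {r ℓ : ℕ} (H' : Matrix (Fin r) (Fin ℓ) (ZMod 3)) :
    (univ.filter (fun x : Fin (2*ℓ) → ZMod 2 =>
        (doubledMatrix H').mulVec (fun j => emb (x j)) = 0)).card
    = ∑ S : Finset (Fin ℓ),
        (univ.filter (fun y : Fin ℓ → ZMod 3 =>
          H'.mulVec y = 0 ∧ ∀ k ∈ S, y k = 0)).card := by
  rw [Finset.card_eq_sum_card_fiberwise (f := Psi) (t := univ) (fun x _ => mem_univ _)]
  refine Finset.sum_congr rfl fun S _ => ?_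
  refine Finset.card_nbij' Phi (fun y => Lam y S) ?_ ?_ ?_ ?_
  · intro x hx
    simp only [Finset.mem_coe, mem_filter, mem_univ, true_and] at hx ⊢
    obtain ⟨hx0, hxS⟩ := hx
    refine ⟨by rw [← mulVec_pair]; exact hx0, ?_⟩
    intro k hk
    rw [← hxS] at hk
    simp only [Psi, mem_filter, mem_univ, true_and] at hk
    rw [Phi, hk.1, hk.2, gamma_ones]
  · intro y hy
    simp only [Finset.mem_coe, mem_filter, mem_univ, true_and] at hy ⊢
    exact ⟨by rw [mulVec_pair, Phi_Lam]; exact hy.1, Psi_Lam y S hy.2⟩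
  · intro x hx
    simp only [Finset.mem_coe, mem_filter, mem_univ, true_and] at hx
    have h := Lam_Phi x
    rw [hx.2] at h
    exact h
  · intro y hy
    exact Phi_Lam y S

lemma natCard_le_ker_mul {R M N : Type*} [Ring R] [AddCommGroup M] [AddCommGroup N]
    [Module R M] [Module R N] [Finite N] (f : M →ₗ[R] N) :
    Nat.card M ≤ Nat.card (LinearMap.ker f) * Nat.card N := by
  rw [Submodule.card_eq_card_quotient_mul_card (LinearMap.ker f)]
  apply Nat.mul_le_mul_left
  rw [Nat.card_congr (LinearMap.quotKerEquivRange f).toEquiv]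
  exact Nat.card_le_card_of_injective _ Subtype.val_injective

lemma fiber_lower {r ℓ : ℕ} (H' : Matrix (Fin r) (Fin ℓ) (ZMod 3)) (S : Finset (Fin ℓ)) :
    3 ^ (ℓ - r - S.card) ≤ (univ.filter (fun y : Fin ℓ → ZMod 3 =>
          H'.mulVec y = 0 ∧ ∀ k ∈ S, y k = 0)).card := by
  have hpos : 0 < (univ.filter (fun y : Fin ℓ → ZMod 3 =>
          H'.mulVec y = 0 ∧ ∀ k ∈ S, y k = 0)).card := by
    apply Finset.card_pos.mpr
    exact ⟨0, by simp [Finset.mem_filter, Matrix.mulVec_zero]⟩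
  by_cases h : r + S.card ≤ ℓ
  · clear hpos
    let L : ((Fin ℓ) → ZMod 3) →ₗ[ZMod 3] ((Fin r → ZMod 3) × ({k // k ∈ S} → ZMod 3)) :=
      (Matrix.mulVecLin H').prod
        (LinearMap.funLeft (ZMod 3) (ZMod 3) (fun k : {k // k ∈ S} => (k : Fin ℓ)))
    have hker : ∀ y, y ∈ LinearMap.ker L ↔ (H'.mulVec y = 0 ∧ ∀ k ∈ S, y k = 0) := by
      intro y
      rw [LinearMap.mem_ker, show L = (Matrix.mulVecLin H').prod
        (LinearMap.funLeft (ZMod 3) (ZMod 3) (fun k : {k // k ∈ S} => (k : Fin ℓ))) from rfl,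
        LinearMap.prod_apply]
      rw [Function.prod, Prod.mk_eq_zero, Matrix.mulVecLin_apply]
      constructor
      · rintro ⟨h1, h2⟩; exact ⟨h1, fun k hk => congrFun h2 ⟨k, hk⟩⟩
      · rintro ⟨h1, h2⟩; exact ⟨h1, funext fun k => h2 k k.2⟩
    have hNcard : (univ.filter (fun y : Fin ℓ → ZMod 3 =>
          H'.mulVec y = 0 ∧ ∀ k ∈ S, y k = 0)).card = Nat.card (LinearMap.ker L) := by
      rw [← Fintype.card_subtype, ← Nat.card_eq_fintype_card]
      exact Nat.card_congr (Equiv.subtypeEquivRight fun y => (hker y).symm)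
    have hdom : Nat.card ((Fin ℓ) → ZMod 3) = 3 ^ ℓ := by
      rw [Nat.card_eq_fintype_card, Fintype.card_fun, ZMod.card, Fintype.card_fin]
    have e2 : Nat.card ((Fin r → ZMod 3) × ({k // k ∈ S} → ZMod 3)) = 3 ^ (r + S.card) := by
      rw [Nat.card_prod, Nat.card_eq_fintype_card, Nat.card_eq_fintype_card,
        Fintype.card_fun, Fintype.card_fun, ZMod.card, Fintype.card_fin, Fintype.card_coe,
        pow_add]
    have hineq : 3 ^ ℓ ≤ Nat.card (LinearMap.ker L) * 3 ^ (r + S.card) := by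
      have h0 := natCard_le_ker_mul L
      rw [hdom, e2] at h0
      exact h0
    have hexp : (ℓ - r - S.card) + (r + S.card) = ℓ := by
      clear hNcard hker hineq
      omega
    have h3 : 3 ^ (ℓ - r - S.card) * 3 ^ (r + S.card) ≤ Nat.card (LinearMap.ker L) * 3 ^ (r + S.card) := by
      rw [← pow_add, hexp]; exact hineq
    have hc : 0 < 3 ^ (r + S.card) := pow_pos (by norm_num) _
    have hfin : 3 ^ (ℓ - r - S.card) ≤ Nat.card (LinearMap.ker L) :=
      le_of_mul_le_mul_right h3 hc
    rw [hNcard]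
    exact hfin
  · have h0 : ℓ - r - S.card = 0 := by
      clear hpos
      omega
    rw [h0, pow_zero]
    exact hpos

lemma three_two_pow (n : ℕ) (hn : 3 ≤ n) : 3 * 2 ^ n ≤ 3 ^ n := by
  induction n, hn using Nat.le_induction with
  | base => norm_num
  | succ n hn ih =>
    have : 3 * 2 ^ (n + 1) = 2 * (3 * 2 ^ n) := by ring
    rw [this, pow_succ]
    calc 2 * (3 * 2 ^ n) ≤ 2 * 3 ^ n := by omega
      _ ≤ 3 ^ n * 3 := by omega

lemma nine_four (n : ℕ) (hn : 1 ≤ n) : 9 * 4 ^ n ≤ 3 * 6 ^ n + 7 * 3 ^ n := by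
  rcases n with _ | _ | _ | n
  · omega
  · norm_num
  · norm_num
  · have h := three_two_pow (n + 3) (by omega)
    have h4 : (4:ℕ) ^ (n+3) = 2 ^ (n+3) * 2 ^ (n+3) := by rw [← mul_pow]; norm_num
    have h6 : (6:ℕ) ^ (n+3) = 2 ^ (n+3) * 3 ^ (n+3) := by rw [← mul_pow]; norm_num
    nlinarith [pow_pos (by norm_num : 0 < 2) (n+3), pow_pos (by norm_num : 0 < 3) (n+3)]

lemma keyIneq (m : ℕ) :
    (∑ j ∈ Finset.range (m+1), (3:ℚ)^j * ((m+2).choose j : ℚ)) + 2*4^(m+1)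
      ≤ 8*3^m + (∑ j ∈ Finset.range (m+1), ((m+2).choose j : ℚ)) * 3^(m+1) := by
  have h3 := add_pow (3:ℚ) 1 (m+2)
  have h1 := add_pow (1:ℚ) 1 (m+2)
  rw [sum_range_succ, sum_range_succ] at h3 h1
  simp only [one_pow, mul_one, one_mul, Nat.choose_self, Nat.cast_one,
    Nat.choose_succ_self_right] at h3 h1
  -- h3 : (3+1)^(m+2) = ∑_{j<m+1} 3^j*C + 3^(m+1)*↑(m+2) + 3^(m+2)
  -- h1 : (1+1)^(m+2) = ∑_{j<m+1} C + ↑(m+2) + 1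
  have hS3 : (∑ j ∈ Finset.range (m+1), (3:ℚ)^j * ((m+2).choose j : ℚ))
      = 4^(m+2) - ((m+2 : ℕ) : ℚ) * 3^(m+1) - 3^(m+2) := by
    linear_combination -h3
  have hS1 : (∑ j ∈ Finset.range (m+1), ((m+2).choose j : ℚ))
      = 2^(m+2) - ((m+2 : ℕ) : ℚ) - 1 := by
    linear_combination -h1
  rw [hS3, hS1]
  have e4 : (2:ℚ)^(m+2) * 3^(m+1) = 2 * 6^(m+1) := by
    rw [show (6:ℚ) = 2*3 by norm_num, mul_pow, pow_succ]; ring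
  have e5 : (9:ℚ) * 4^(m+1) ≤ 3 * 6^(m+1) + 7 * 3^(m+1) := by
    exact_mod_cast nine_four (m+1) (by omega)
  have e3 : (3:ℚ)^(m+1) = 3 * 3^m := by rw [pow_succ]; ring
  have e2 : (3:ℚ)^(m+2) = 3 * 3^(m+1) := by rw [pow_succ]; ring
  have e1 : (4:ℚ)^(m+2) = 4 * 4^(m+1) := by rw [pow_succ]; ring
  nlinarith [e4, e5, e3, e2, e1]

lemma mainQ {r ℓ : ℕ} (hr : 0 < r) (hrl : r < ℓ) :
    (4 : ℚ) ^ ℓ / 3 ^ r + 2 * (4 / 3) ^ r - 8 / 3 ≤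
      ((∑ k ∈ Finset.range (ℓ+1), ℓ.choose k * 3 ^ (ℓ - r - k) : ℕ) : ℚ) := by
  obtain ⟨m, rfl⟩ : ∃ m, r = m + 1 := ⟨r - 1, by omega⟩
  push_cast
  set T : ℚ := ∑ k ∈ Finset.range (ℓ+1), (ℓ.choose k : ℚ) * 3 ^ (ℓ - (m+1) - k) with hT
  have h3pos : (0:ℚ) < 3 ^ (m+1) := by positivity
  have hs : ℓ - (m + 1) + 1 ≤ ℓ + 1 := by omega
  -- split the sum
  have hsplit : ∀ g : ℕ → ℚ, ∑ k ∈ Finset.range (ℓ+1), g k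
      = ∑ k ∈ Finset.range (ℓ - (m+1) + 1), g k + ∑ k ∈ Finset.Ico (ℓ - (m+1) + 1) (ℓ+1), g k := by
    intro g
    exact (Finset.sum_range_add_sum_Ico g hs).symm
  -- reindex the tail
  have hreindex : ∀ g : ℕ → ℚ, ∑ k ∈ Finset.Ico (ℓ - (m+1) + 1) (ℓ+1), g k
      = ∑ j ∈ Finset.range (m+1), g (ℓ - j) := by
    intro g
    refine Finset.sum_nbij' (fun k => ℓ - k) (fun j => ℓ - j) ?_ ?_ ?_ ?_ ?_
    · intro k hk; simp only [Finset.mem_Ico] at hk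
      have : ℓ - k < m + 1 := by omega
      simpa [Finset.mem_range] using this
    · intro j hj; simp only [Finset.mem_range] at hj
      have : ℓ - (m+1) + 1 ≤ ℓ - j ∧ ℓ - j < ℓ + 1 := by omega
      simpa [Finset.mem_Ico] using this
    · intro k hk; simp only [Finset.mem_Ico] at hk
      show ℓ - (ℓ - k) = k
      omega
    · intro j hj; simp only [Finset.mem_range] at hj
      show ℓ - (ℓ - j) = j
      omega
    · intro k hk; simp only [Finset.mem_Ico] at hk
      show g k = g (ℓ - (ℓ - k))
      have h2 : ℓ - (ℓ - k) = k := by omega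
      rw [h2]
  -- the big inequality
  have big : (4:ℚ)^ℓ + 2*4^(m+1) ≤ 8*3^m + 3^(m+1) * T := by
    have hpow4 : (4:ℚ)^ℓ = ∑ k ∈ Finset.range (ℓ+1), 3 ^ (ℓ-k) * (ℓ.choose k : ℚ) := by
      have := add_pow (1:ℚ) 3 ℓ
      simp only [one_pow, one_mul] at this
      norm_num at this
      exact this
    have hTmul : 3^(m+1) * T
        = ∑ k ∈ Finset.range (ℓ - (m+1) + 1), 3 ^ (ℓ-k) * (ℓ.choose k : ℚ)
          + ∑ j ∈ Finset.range (m+1), (ℓ.choose (ℓ - j) : ℚ) * 3^(m+1) := by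
      rw [hT, Finset.mul_sum, hsplit (fun k => 3^(m+1) * ((ℓ.choose k : ℚ) * 3 ^ (ℓ - (m+1) - k))),
        hreindex (fun k => 3^(m+1) * ((ℓ.choose k : ℚ) * 3 ^ (ℓ - (m+1) - k)))]
      congr 1
      · refine Finset.sum_congr rfl fun k hk => ?_
        simp only [Finset.mem_range] at hk
        have hkk : m + 1 + (ℓ - (m+1) - k) = ℓ - k := by omega
        have hpp : (3:ℚ)^(m+1) * 3^(ℓ-(m+1)-k) = 3^(ℓ-k) := by rw [← pow_add, hkk]
        linear_combination (ℓ.choose k : ℚ) * hpp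
      · refine Finset.sum_congr rfl fun j hj => ?_
        simp only [Finset.mem_range] at hj
        have : ℓ - (m+1) - (ℓ - j) = 0 := by omega
        rw [this, pow_zero]; ring
    have hpow4' : (4:ℚ)^ℓ = ∑ k ∈ Finset.range (ℓ - (m+1) + 1), 3 ^ (ℓ-k) * (ℓ.choose k : ℚ)
        + ∑ j ∈ Finset.range (m+1), 3 ^ j * (ℓ.choose (ℓ - j) : ℚ) := by
      rw [hpow4, hsplit (fun k => 3 ^ (ℓ-k) * (ℓ.choose k : ℚ)),
        hreindex (fun k => 3 ^ (ℓ-k) * (ℓ.choose k : ℚ))]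
      congr 1
      refine Finset.sum_congr rfl fun j hj => ?_
      simp only [Finset.mem_range] at hj
      have : ℓ - (ℓ - j) = j := by omega
      rw [this]
    -- choose symmetry
    have hsym : ∀ j ∈ Finset.range (m+1), (ℓ.choose (ℓ - j) : ℚ) = (ℓ.choose j : ℚ) := by
      intro j hj
      simp only [Finset.mem_range] at hj
      exact_mod_cast congrArg (Nat.cast (R := ℚ)) (Nat.choose_symm (by omega : j ≤ ℓ))
    have hsymT : ∑ j ∈ Finset.range (m+1), (ℓ.choose (ℓ - j) : ℚ) * 3^(m+1)
        = ∑ j ∈ Finset.range (m+1), (ℓ.choose j : ℚ) * 3^(m+1) :=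
      Finset.sum_congr rfl fun j hj => by rw [hsym j hj]
    rw [hsymT] at hTmul
    have hsym2 : ∑ j ∈ Finset.range (m+1), (3:ℚ) ^ j * (ℓ.choose (ℓ - j) : ℚ)
        = ∑ j ∈ Finset.range (m+1), (3:ℚ) ^ j * (ℓ.choose j : ℚ) :=
      Finset.sum_congr rfl fun j hj => by rw [hsym j hj]
    rw [hsym2] at hpow4'
    -- termwise swap inequality
    have hswap : ∑ j ∈ Finset.range (m+1),
        ((3:ℚ)^j * (ℓ.choose j : ℚ) + ((m+2).choose j : ℚ) * 3^(m+1))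
        ≤ ∑ j ∈ Finset.range (m+1),
        ((3:ℚ)^j * ((m+2).choose j : ℚ) + (ℓ.choose j : ℚ) * 3^(m+1)) := by
      refine Finset.sum_le_sum fun j hj => ?_
      simp only [Finset.mem_range] at hj
      have hc : ((m+2).choose j : ℚ) ≤ (ℓ.choose j : ℚ) :=
        Nat.cast_le.mpr (Nat.choose_le_choose j (by omega))
      have hp : (3:ℚ)^j ≤ 3^(m+1) :=
        pow_le_pow_right₀ (by norm_num) (by omega)
      nlinarith [mul_nonneg (sub_nonneg.mpr hc) (sub_nonneg.mpr hp)]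
    rw [Finset.sum_add_distrib, Finset.sum_add_distrib] at hswap
    have hkey := keyIneq m
    rw [Finset.sum_mul] at hkey
    -- combine
    have hA := hpow4'
    have hB := hTmul
    linarith [hswap, hkey, hA, hB]
  -- conclude
  have expand : (4:ℚ)^ℓ / 3^(m+1) + 2*(4/3)^(m+1) - 8/3
      = (4^ℓ + 2*4^(m+1) - 8*3^m) / 3^(m+1) := by
    rw [div_pow]
    field_simp
    ring
  rw [expand, div_le_iff₀ h3pos]
  linarith [big]

lemma groupByCard {r ℓ : ℕ} :
    ∑ S : Finset (Fin ℓ), 3 ^ (ℓ - r - S.card)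
      = ∑ k ∈ Finset.range (ℓ+1), ℓ.choose k * 3 ^ (ℓ - r - k) := by
  rw [← Finset.powerset_univ, Finset.sum_powerset]
  rw [Finset.card_univ, Fintype.card_fin]
  refine Finset.sum_congr rfl fun k _ => ?_
  rw [Finset.sum_powersetCard k Finset.univ (fun c => 3 ^ (ℓ - r - c))]
  rw [Finset.card_univ, Fintype.card_fin, smul_eq_mul]

theorem stmt19 {r ℓ : ℕ} (hr : 0 < r) (hrl : r < ℓ)
    (H' : Matrix (Fin r) (Fin ℓ) (ZMod 3)) (hrank : H'.rank = r) :
    (4 : ℚ) ^ ℓ / 3 ^ r + 2 * (4 / 3) ^ r - 8 / 3 ≤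
      (Nat.card {x : Fin (2 * ℓ) → ZMod 2 |
        (doubledMatrix H').mulVec (fun j => emb (x j)) = 0} : ℚ) := by
  classical
  have hNat : (Nat.card {x : Fin (2 * ℓ) → ZMod 2 |
        (doubledMatrix H').mulVec (fun j => emb (x j)) = 0})
      = (univ.filter (fun x : Fin (2*ℓ) → ZMod 2 =>
        (doubledMatrix H').mulVec (fun j => emb (x j)) = 0)).card := by
    rw [Nat.card_eq_fintype_card, Fintype.card_subtype]
    congr 1
  rw [hNat, count_eq]
  have hsum : ∑ S : Finset (Fin ℓ), 3 ^ (ℓ - r - S.card)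
      ≤ ∑ S : Finset (Fin ℓ), (univ.filter (fun y : Fin ℓ → ZMod 3 =>
          H'.mulVec y = 0 ∧ ∀ k ∈ S, y k = 0)).card :=
    Finset.sum_le_sum fun S _ => fiber_lower H' S
  rw [groupByCard] at hsum
  calc (4 : ℚ) ^ ℓ / 3 ^ r + 2 * (4 / 3) ^ r - 8 / 3
      ≤ ((∑ k ∈ Finset.range (ℓ+1), ℓ.choose k * 3 ^ (ℓ - r - k) : ℕ) : ℚ) :=
        mainQ hr hrl
    _ ≤ _ := Nat.cast_le.mpr hsum
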